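/- For every A ⊆ S: A ∈ 𝒩 if and only if every path between y and t contains a non-collider that belongs to A (characterization of 𝒩 from the proof of Proposition 2). -/

import Mathlib

/-!  A graph-theoretic framework for d-separation in a finite directed acyclic
graph with vertex set `{y, t} ∪ S`, following the paper's conventions. -/

/-- Two vertices are adjacent if there is an edge between them in either direction. -/
def Adj {V : Type*} (E : V → V → Prop) (a b : V) : Prop := E a b ∨ E b a

/-- The full vertex sequence of a candidate path between `y` and `t` whose list of
intermediate vertices is `p`. -/
def pathSeq {V : Type*} (y t : V) (p : List V) : List V := y :: (p ++ [t])

/-- `p` is the list of intermediate vertices of a path between `y` and `t`: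
consecutive vertices of the full sequence `y :: p ++ [t]` are joined by an edge of
the graph (in either direction), and all vertices of the full sequence are
pairwise distinct. -/
def IsPath {V : Type*} (E : V → V → Prop) (y t : V) (p : List V) : Prop :=
  List.Chain' (Adj E) (pathSeq y t p) ∧ (pathSeq y t p).Nodup

/-- `v` is a collider of the path: it is an intermediate vertex and both edges of
the path adjacent to it point into it. -/
def IsCollider {V : Type*} (E : V → V → Prop) (y t : V) (p : List V) (v : V) : Prop :=
  v ∈ p ∧ ∃ a b, [a, v, b] <:+: pathSeq y t p ∧ E a v ∧ E b v

/-- `v` is a non-collider of the path: an intermediate vertex that is not a collider. -/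
def IsNonCollider {V : Type*} (E : V → V → Prop) (y t : V) (p : List V) (v : V) : Prop :=
  v ∈ p ∧ ¬ IsCollider E y t p v

/-- `d` is a descendant of `c`: there is a directed path of length ≥ 1 from `c` to `d`. -/
def Descendant {V : Type*} (E : V → V → Prop) (c d : V) : Prop := Relation.TransGen E c d

/-- The path with intermediate vertices `p` is blocked by the set `A`: some
non-collider of the path belongs to `A`, or some collider `c` of the path is such
that neither `c` nor any descendant of `c` belongs to `A`. -/
def Blocked {V : Type*} (E : V → V → Prop) (y t : V) (A : Set V) (p : List V) : Prop :=
  (∃ v, IsNonCollider E y t p v ∧ v ∈ A) ∨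
    (∃ c, IsCollider E y t p c ∧ c ∉ A ∧ ∀ d, Descendant E c d → d ∉ A)

/-- `A` d-separates `y` and `t`: `A ⊆ S` and every path between `y` and `t` is
blocked by `A`.  (`A ∈ 𝒜` in the paper's notation.) -/
def DSep {V : Type*} (E : V → V → Prop) (y t : V) (S A : Set V) : Prop :=
  A ⊆ S ∧ ∀ p, IsPath E y t p → Blocked E y t A p

/-- The directed graph is acyclic. -/
def Acyclic {V : Type*} (E : V → V → Prop) : Prop := ∀ v, ¬ Relation.TransGen E v v

/-- Structural assumption: every edge incident to `y` has head `y` and tail in `S`,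
and every edge incident to `t` has head `t` and tail in `S`. -/
def Structural {V : Type*} (E : V → V → Prop) (y t : V) (S : Set V) : Prop :=
  (∀ a, ¬ E y a) ∧ (∀ a, ¬ E t a) ∧ (∀ a, E a y → a ∈ S) ∧ (∀ a, E a t → a ∈ S)

/-- `A` is a locally minimal element of `𝒜`: it d-separates `y` and `t` and no
proper subset of it does. -/
def LocallyMinimal {V : Type*} (E : V → V → Prop) (y t : V) (S A : Set V) : Prop :=
  DSep E y t S A ∧ ∀ B, B ⊂ A → ¬ DSep E y t S B

/-- `A ∈ 𝒩`: `A` d-separates `y` and `t` and so does every `B` with `A ⊆ B ⊆ S`. -/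
def InN {V : Type*} (E : V → V → Prop) (y t : V) (S A : Set V) : Prop :=
  DSep E y t S A ∧ ∀ B, A ⊆ B → B ⊆ S → DSep E y t S B

/-- characterization of `𝒩`: for every `A ⊆ S`, `A ∈ 𝒩` if and
only if every path between `y` and `t` contains a non-collider belonging
to `A`. -/
theorem stmt9 {V : Type*} [Fintype V] (E : V → V → Prop) (y t : V) (S : Set V)
    (hyt : y ≠ t) (hyS : y ∉ S) (htS : t ∉ S)
    (hcover : ∀ v, v = y ∨ v = t ∨ v ∈ S)
    (hacyc : Acyclic E) :
    ∀ A : Set V, A ⊆ S →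
      (InN E y t S A ↔
        ∀ p, IsPath E y t p → ∃ v, IsNonCollider E y t p v ∧ v ∈ A) := by
  intro A hAS
  constructor
  · rintro ⟨hA, hN⟩ p hp
    by_contra hcon
    push_neg at hcon
    set B : Set V := S \ {v | IsNonCollider E y t p v ∧ v ∉ A} with hB
    have hAB : A ⊆ B := fun v hv => ⟨hAS hv, fun h => h.2 hv⟩
    have hBS : B ⊆ S := fun v hv => hv.1
    obtain ⟨-, hblock⟩ := hN B hAB hBS
    have hpS : ∀ v ∈ p, v ∈ S := by
      intro v hv
      have hnd := hp.2
      simp only [pathSeq, List.nodup_cons, List.mem_append, List.mem_singleton,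
        List.nodup_append, List.nodup_singleton, List.disjoint_singleton] at hnd
      rcases hcover v with h | h | h
      · exact absurd (Or.inl hv) (h ▸ hnd.1)
      · exact absurd h (hnd.2.2.2 v hv t rfl)
      · exact h
    rcases hblock p hp with ⟨v, hnc, hvB⟩ | ⟨c, hc, hcB, -⟩
    · exact hcon v hnc (by_contra fun hvA => hvB.2 ⟨hnc, hvA⟩)
    · exact absurd ⟨hpS c hc.1, fun h => h.1.2 hc⟩ hcB
  · intro h
    refine ⟨⟨hAS, fun p hp => Or.inl (h p hp)⟩, fun B hAB hBS =>
      ⟨hBS, fun p hp => ?_⟩⟩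
    obtain ⟨v, hv, hvA⟩ := h p hp
    exact Or.inl ⟨v, hv, hAB hvA⟩
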